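/- Let G be a biextraspecial group with standard generators: let D₁ and D₂ be dents with standard bases {x₁,y₁} and {x₂,y₂} with respect to L = ⟨s,t⟩, and Z = ⟨a,b⟩ with a fixed by t. Then either [D₁,D₂] = 1, or the commutators are uniquely determined: [x₁,x₂] = a, [y₁,y₂] = b, and [x₁,y₂] = [y₁,x₂] = ab. -/

import Mathlib

open scoped commutatorElement

/-- The centre of the subgroup `Q`, viewed as a subgroup of the ambient group `G`. -/
def centerOf (G : Type*) [Group G] (Q : Subgroup G) : Subgroup G :=
  Subgroup.centralizer (Q : Set G) ⊓ Q

/-- A biextraspecial group of rank `m`: `G` is an extension of a special 2-group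
`Q` of order `2^(2+2m)` by `L₂(2) ≅ S₃`, the centre `Z = Z(Q) ≅ 2²` is the natural
module (elementary abelian of order 4 with faithful induced `G/Q`-action), `Q/Z` is
elementary abelian, and every element of order 3 acts fixed-point-freely on `Q`
(equivalently, `Q/Z` has only natural composition factors). -/
structure IsBiextraspecial (G : Type*) [Group G] (Q : Subgroup G) (m : ℕ) : Prop where
  normal : Q.Normal
  card_Q : Nat.card Q = 2 ^ (2 + 2 * m)
  quot_iso : Nonempty ((G ⧸ Q) ≃* Equiv.Perm (Fin 3))
  card_center : Nat.card (centerOf G Q) = 4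
  center_exponent : ∀ z ∈ centerOf G Q, z * z = 1
  center_faithful : ∀ g : G, (∀ z ∈ centerOf G Q, g * z * g⁻¹ = z) → g ∈ Q
  sq_mem_center : ∀ q ∈ Q, q * q ∈ centerOf G Q
  comm_mem_center : ∀ q ∈ Q, ∀ r ∈ Q, ⁅q, r⁆ ∈ centerOf G Q
  order_three_fpf : ∀ g : G, orderOf g = 3 → ∀ q ∈ Q, g * q * g⁻¹ = q → q = 1

/-- A dent: a normal subgroup `D` of `G` with `Z(Q) < D < Q` such that `D/Z` is an
irreducible `L`-submodule of `Q/Z` (i.e. `D` is minimal among normal subgroups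
strictly containing `Z(Q)`). -/
structure IsDent (G : Type*) [Group G] (Q D : Subgroup G) : Prop where
  normal : D.Normal
  center_lt : centerOf G Q < D
  lt_Q : D < Q
  minimal : ∀ E : Subgroup G, E.Normal → centerOf G Q < E → E ≤ D → E = D

/-- `D₃` is the diagonal dent of the distinct dents `D₁` and `D₂`: the unique third
dent contained in `D₁D₂`. -/
def IsDiagonal (G : Type*) [Group G] (Q D₁ D₂ D₃ : Subgroup G) : Prop :=
  IsDent G Q D₁ ∧ IsDent G Q D₂ ∧ IsDent G Q D₃ ∧
    D₁ ≠ D₂ ∧ D₃ ≠ D₁ ∧ D₃ ≠ D₂ ∧ D₃ ≤ D₁ ⊔ D₂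

/-- Two subgroups commute elementwise, i.e. `[D₁, D₂] = 1`. -/
def DentsCommute (G : Type*) [Group G] (D₁ D₂ : Subgroup G) : Prop :=
  ∀ d₁ ∈ D₁, ∀ d₂ ∈ D₂, d₁ * d₂ = d₂ * d₁

/-- A dent is singular when it is elementary abelian (of type `2⁴`). -/
def IsSingularDent (G : Type*) [Group G] (D : Subgroup G) : Prop :=
  ∀ d ∈ D, d * d = 1

/-- A standard basis `x, y` of a dent `D` with respect to `L = ⟨s, t⟩`:
`D = ⟨x, y, Z⟩` with `xᵗ = x`, `xˢ = y` and `yˢ = xy` (singular case) or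
`yˢ = x⁻¹y⁻¹` (non-singular case). -/
structure StdBasis (G : Type*) [Group G] (Q : Subgroup G) (s t : G)
    (D : Subgroup G) (x y : G) : Prop where
  x_mem : x ∈ D
  x_notin : x ∉ centerOf G Q
  gen : D = centerOf G Q ⊔ Subgroup.closure {x, y}
  t_fix : t * x * t⁻¹ = x
  s_x : s * x * s⁻¹ = y
  s_y : s * y * s⁻¹ = x * y ∨ s * y * s⁻¹ = x⁻¹ * y⁻¹

/-- two dents with standard bases either commute or have the uniquely
determined commutator table `[x₁,x₂] = a`, `[y₁,y₂] = b`, `[x₁,y₂] = [y₁,x₂] = ab`. -/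
theorem stmt5 (G : Type*) [Group G] (Q L : Subgroup G) (m : ℕ)
    (hG : IsBiextraspecial G Q m) (hL : Q.IsComplement' L)
    (s t : G) (hs : s ∈ L) (ht : t ∈ L) (hos : orderOf s = 3) (hot : orderOf t = 2)
    (a b : G) (ha : a ∈ centerOf G Q) (ha1 : a ≠ 1)
    (hta : t * a * t⁻¹ = a) (hsa : s * a * s⁻¹ = b)
    (hZ : centerOf G Q = Subgroup.closure {a, b})
    (D₁ D₂ : Subgroup G) (x₁ y₁ x₂ y₂ : G)
    (hD₁ : IsDent G Q D₁) (hD₂ : IsDent G Q D₂)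
    (hB₁ : StdBasis G Q s t D₁ x₁ y₁) (hB₂ : StdBasis G Q s t D₂ x₂ y₂) :
    DentsCommute G D₁ D₂ ∨
      (⁅x₁, x₂⁆ = a ∧ ⁅y₁, y₂⁆ = b ∧ ⁅x₁, y₂⁆ = a * b ∧ ⁅y₁, x₂⁆ = a * b) := by
  
  classical
  -- basic facts about the centre Z
  have hZleQ : centerOf G Q ≤ Q := inf_le_right
  have hZcent : ∀ z ∈ centerOf G Q, ∀ q ∈ Q, q * z = z * q := by
    intro z hz q hq
    exact Subgroup.mem_centralizer_iff.mp (Subgroup.mem_inf.mp hz).1 q hq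
  have hZconj : ∀ (g : G), ∀ z ∈ centerOf G Q, g * z * g⁻¹ ∈ centerOf G Q := by
    intro g z hz
    obtain ⟨hz1, hz2⟩ := Subgroup.mem_inf.mp hz
    refine Subgroup.mem_inf.mpr ⟨Subgroup.mem_centralizer_iff.mpr ?_, hG.normal.conj_mem z hz2 g⟩
    intro q hq
    have hq' : g⁻¹ * q * g ∈ Q := by
      have := hG.normal.conj_mem q hq g⁻¹
      simpa using this
    have h := Subgroup.mem_centralizer_iff.mp hz1 _ hq'
    have h2 := congrArg (fun w => g * w * g⁻¹) h
    simpa [mul_assoc] using h2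
  have hbZ : b ∈ centerOf G Q := by
    rw [hZ]; exact Subgroup.subset_closure (by simp)
  have haa : a * a = 1 := hG.center_exponent a ha
  have hbb : b * b = 1 := hG.center_exponent b hbZ
  have hcomm : a * b = b * a := (hZcent a ha b (hZleQ hbZ)).symm
  have habZ : a * b ∈ centerOf G Q := mul_mem ha hbZ
  have habab : (a * b) * (a * b) = 1 := hG.center_exponent _ habZ
  have hb1 : b ≠ 1 := by
    intro h
    apply ha1
    have h1 : a = s⁻¹ * (s * a * s⁻¹) * s := by group
    rw [hsa, h] at h1
    simpa using h1
  have hab : a ≠ b := by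
    intro h
    have h4 := hG.card_center
    rw [hZ, ← h, Set.pair_eq_singleton, ← Subgroup.zpowers_eq_closure, Nat.card_zpowers] at h4
    have hdvd : orderOf a ∣ 2 := orderOf_dvd_of_pow_eq_one (by rw [pow_two]; exact haa)
    rw [h4] at hdvd
    norm_num at hdvd
  have hab1 : a * b ≠ 1 := fun h =>
    hab ((inv_eq_of_mul_eq_one_right haa).symm.trans (inv_eq_of_mul_eq_one_right h))
  have p1 : a * (a * b) = b := by rw [← mul_assoc, haa, one_mul]
  have p2 : b * (a * b) = a := by rw [hcomm, ← mul_assoc, hbb, one_mul]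
  have p3 : (a * b) * a = b := by rw [mul_assoc, ← hcomm, p1]
  have p4 : (a * b) * b = a := by rw [mul_assoc, hbb, mul_one]
  have p5 : b * a = a * b := hcomm.symm
  have ia : a⁻¹ = a := inv_eq_of_mul_eq_one_right haa
  have ib : b⁻¹ = b := inv_eq_of_mul_eq_one_right hbb
  have iab : (a * b)⁻¹ = a * b := inv_eq_of_mul_eq_one_right habab
  have elems : ∀ z ∈ centerOf G Q, z = 1 ∨ z = a ∨ z = b ∨ z = a * b := by
    intro z hz
    rw [hZ] at hz
    induction hz using Subgroup.closure_induction with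
    | mem x hx =>
      simp only [Set.mem_insert_iff, Set.mem_singleton_iff] at hx
      rcases hx with rfl | rfl
      · exact Or.inr (Or.inl rfl)
      · exact Or.inr (Or.inr (Or.inl rfl))
    | one => exact Or.inl rfl
    | mul x y hx hy ihx ihy =>
      rcases ihx with rfl | rfl | rfl | rfl <;> rcases ihy with rfl | rfl | rfl | rfl <;>
        simp [p1, p2, p3, p4, p5, haa, hbb, habab]
    | inv x hx ihx =>
      rcases ihx with rfl | rfl | rfl | rfl <;> simp [ia, ib, iab]
  -- conjugation helpers
  have conj_inj : ∀ (g z w : G), g * z * g⁻¹ = g * w * g⁻¹ → z = w :=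
    fun g z w h => mul_left_cancel (mul_right_cancel h)
  have conj_mul : ∀ g z w : G, g * (z * w) * g⁻¹ = (g * z * g⁻¹) * (g * w * g⁻¹) := by
    intro g z w; group
  have conjC : ∀ g p q : G, g * ⁅p, q⁆ * g⁻¹ = ⁅g * p * g⁻¹, g * q * g⁻¹⁆ := by
    intro g p q; simp only [commutatorElement_def]; group
  -- action of s on b
  have hsb : s * b * s⁻¹ = a * b := by
    rcases elems _ (hZconj s b hbZ) with h | h | h | h
    · exact absurd (conj_inj s b 1 (by rw [h]; group)) hb1
    · exfalso
      have hs2a : (s * s) * a * (s * s)⁻¹ = a := by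
        have hc1 : (s * s) * a * (s * s)⁻¹ = s * (s * a * s⁻¹) * s⁻¹ := by group
        rw [hc1, hsa, h]
      have hs2b : (s * s) * b * (s * s)⁻¹ = b := by
        have hc1 : (s * s) * b * (s * s)⁻¹ = s * (s * b * s⁻¹) * s⁻¹ := by group
        rw [hc1, h, hsa]
      have hfix : ∀ z ∈ centerOf G Q, (s * s) * z * (s * s)⁻¹ = z := by
        intro z hz
        rw [hZ] at hz
        induction hz using Subgroup.closure_induction with
        | mem x hx =>
          simp only [Set.mem_insert_iff, Set.mem_singleton_iff] at hx
          rcases hx with rfl | rfl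
          · exact hs2a
          · exact hs2b
        | one => group
        | mul x y hx hy ihx ihy => rw [conj_mul, ihx, ihy]
        | inv x hx ihx =>
          simpa [mul_inv_rev, mul_assoc] using congrArg (·⁻¹) ihx
      have hsQ : s * s ∈ Q := hG.center_faithful _ hfix
      have hs1 : s * s = 1 := Subgroup.disjoint_def.mp hL.disjoint hsQ (mul_mem hs hs)
      have hdvd : orderOf s ∣ 2 := orderOf_dvd_of_pow_eq_one (by rw [pow_two]; exact hs1)
      rw [hos] at hdvd
      norm_num at hdvd
    · exfalso
      have hc1 : s * (a * b) * s⁻¹ = 1 := by rw [conj_mul, hsa, h, hbb]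
      exact absurd (conj_inj s (a * b) 1 (by rw [hc1]; group)) hab1
    · exact h
  -- action of t on b
  have htb : t * b * t⁻¹ = a * b := by
    rcases elems _ (hZconj t b hbZ) with h | h | h | h
    · exact absurd (conj_inj t b 1 (by rw [h]; group)) hb1
    · exact absurd (conj_inj t b a (by rw [h, hta])) (Ne.symm hab)
    · exfalso
      have hfix : ∀ z ∈ centerOf G Q, t * z * t⁻¹ = z := by
        intro z hz
        rw [hZ] at hz
        induction hz using Subgroup.closure_induction with
        | mem x hx =>
          simp only [Set.mem_insert_iff, Set.mem_singleton_iff] at hx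
          rcases hx with rfl | rfl
          · exact hta
          · exact h
        | one => simp
        | mul x y hx hy ihx ihy => rw [conj_mul, ihx, ihy]
        | inv x hx ihx =>
          have hc1 : t * x⁻¹ * t⁻¹ = (t * x * t⁻¹)⁻¹ := by group
          rw [hc1, ihx]
      have htQ : t ∈ Q := hG.center_faithful _ hfix
      have ht1 : t = 1 := Subgroup.disjoint_def.mp hL.disjoint htQ ht
      rw [ht1, orderOf_one] at hot
      norm_num at hot
    · exact h
  have hsab : s * (a * b) * s⁻¹ = a := by rw [conj_mul, hsa, hsb, p2]
  have htab : t * (a * b) * t⁻¹ = b := by rw [conj_mul, hta, htb, p1]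
  -- memberships of the basis elements
  have hx₁D : x₁ ∈ D₁ := hB₁.x_mem
  have hx₁Q : x₁ ∈ Q := hD₁.lt_Q.le hx₁D
  have hy₁D : y₁ ∈ D₁ := by rw [← hB₁.s_x]; exact hD₁.normal.conj_mem x₁ hx₁D s
  have hy₁Q : y₁ ∈ Q := hD₁.lt_Q.le hy₁D
  have hx₂D : x₂ ∈ D₂ := hB₂.x_mem
  have hx₂Q : x₂ ∈ Q := hD₂.lt_Q.le hx₂D
  have hy₂D : y₂ ∈ D₂ := by rw [← hB₂.s_x]; exact hD₂.normal.conj_mem x₂ hx₂D s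
  have hy₂Q : y₂ ∈ Q := hD₂.lt_Q.le hy₂D
  -- commutator calculus
  have commZ : ∀ p ∈ Q, ∀ q ∈ Q, ⁅p, q⁆ ∈ centerOf G Q := hG.comm_mem_center
  have cent' : ∀ p ∈ Q, ∀ q ∈ Q, ∀ r ∈ Q, p * ⁅q, r⁆ = ⁅q, r⁆ * p := by
    intro p hp q hq r hr
    exact hZcent _ (commZ q hq r hr) p hp
  have commsq : ∀ p ∈ Q, ∀ q ∈ Q, ⁅p, q⁆ * ⁅p, q⁆ = 1 :=
    fun p hp q hq => hG.center_exponent _ (commZ p hp q hq)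
  have commswap : ∀ p ∈ Q, ∀ q ∈ Q, ∀ p' ∈ Q, ∀ q' ∈ Q,
      ⁅p, q⁆ * ⁅p', q'⁆ = ⁅p', q'⁆ * ⁅p, q⁆ := by
    intro p hp q hq p' hp' q' hq'
    exact hZcent _ (commZ p' hp' q' hq') _ (hZleQ (commZ p hp q hq))
  have bilL : ∀ p ∈ Q, ∀ p' ∈ Q, ∀ q ∈ Q, ⁅p * p', q⁆ = ⁅p, q⁆ * ⁅p', q⁆ := by
    intro p hp p' hp' q hq
    have h1 : ⁅p * p', q⁆ = p * ⁅p', q⁆ * p⁻¹ * ⁅p, q⁆ := by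
      simp only [commutatorElement_def]; group
    rw [h1, cent' p hp p' hp' q hq, mul_inv_cancel_right]
    exact commswap p' hp' q hq p hp q hq
  have bilR : ∀ p ∈ Q, ∀ q ∈ Q, ∀ q' ∈ Q, ⁅p, q * q'⁆ = ⁅p, q⁆ * ⁅p, q'⁆ := by
    intro p hp q hq q' hq'
    have h1 : ⁅p, q * q'⁆ = ⁅p, q⁆ * (q * ⁅p, q'⁆ * q⁻¹) := by
      simp only [commutatorElement_def]; group
    rw [h1, cent' q hq p hp q' hq', mul_inv_cancel_right]
  have invL : ∀ p ∈ Q, ∀ q ∈ Q, ⁅p⁻¹, q⁆ = ⁅p, q⁆ := by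
    intro p hp q hq
    have h1 : ⁅p⁻¹, q⁆ = p⁻¹ * ⁅q, p⁆ * p := by
      simp only [commutatorElement_def]; group
    rw [h1, cent' p⁻¹ (inv_mem hp) q hq p hp, inv_mul_cancel_right, ← commutatorElement_inv]
    exact inv_eq_of_mul_eq_one_right (commsq p hp q hq)
  have invR : ∀ p ∈ Q, ∀ q ∈ Q, ⁅p, q⁻¹⁆ = ⁅p, q⁆ := by
    intro p hp q hq
    have h1 : ⁅p, q⁻¹⁆ = q⁻¹ * ⁅q, p⁆ * q := by
      simp only [commutatorElement_def]; group
    rw [h1, cent' q⁻¹ (inv_mem hq) q hq p hp, inv_mul_cancel_right, ← commutatorElement_inv]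
    exact inv_eq_of_mul_eq_one_right (commsq p hp q hq)
  -- the images of y₁, y₂ under s behave like x·y in commutators
  have hsy₂ : ∀ w ∈ Q, ⁅w, s * y₂ * s⁻¹⁆ = ⁅w, x₂⁆ * ⁅w, y₂⁆ := by
    intro w hw
    rcases hB₂.s_y with h | h
    · rw [h, bilR w hw x₂ hx₂Q y₂ hy₂Q]
    · rw [h, bilR w hw x₂⁻¹ (inv_mem hx₂Q) y₂⁻¹ (inv_mem hy₂Q),
        invR w hw x₂ hx₂Q, invR w hw y₂ hy₂Q]
  have hsy₁ : ∀ w ∈ Q, ⁅s * y₁ * s⁻¹, w⁆ = ⁅x₁, w⁆ * ⁅y₁, w⁆ := by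
    intro w hw
    rcases hB₁.s_y with h | h
    · rw [h, bilL x₁ hx₁Q y₁ hy₁Q w hw]
    · rw [h, bilL x₁⁻¹ (inv_mem hx₁Q) y₁⁻¹ (inv_mem hy₁Q) w hw,
        invL x₁ hx₁Q w hw, invL y₁ hy₁Q w hw]
  -- key conjugation relations among the four commutators
  have hsc : s * ⁅x₁, x₂⁆ * s⁻¹ = ⁅y₁, y₂⁆ := by rw [conjC, hB₁.s_x, hB₂.s_x]
  have htc : t * ⁅x₁, x₂⁆ * t⁻¹ = ⁅x₁, x₂⁆ := by rw [conjC, hB₁.t_fix, hB₂.t_fix]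
  have hsd : s * ⁅x₁, y₂⁆ * s⁻¹ = ⁅y₁, x₂⁆ * ⁅y₁, y₂⁆ := by
    rw [conjC, hB₁.s_x]; exact hsy₂ y₁ hy₁Q
  have hsf : s * ⁅y₁, y₂⁆ * s⁻¹ = (⁅x₁, x₂⁆ * ⁅x₁, y₂⁆) * (⁅y₁, x₂⁆ * ⁅y₁, y₂⁆) := by
    rw [conjC, hsy₁ _ (hG.normal.conj_mem y₂ hy₂Q s), hsy₂ x₁ hx₁Q, hsy₂ y₁ hy₁Q]
  -- main case split on [x₁, x₂]
  rcases elems _ (commZ x₁ hx₁Q x₂ hx₂Q) with hc | hc | hc | hc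
  · -- [x₁,x₂] = 1 : the dents commute
    left
    have hf : ⁅y₁, y₂⁆ = 1 := by
      rw [hc] at hsc; simpa using hsc.symm
    have hde : ⁅x₁, y₂⁆ * ⁅y₁, x₂⁆ = 1 := by
      have h1 := hsf
      rw [hc, hf] at h1
      simpa using h1.symm
    have he : ⁅y₁, x₂⁆ = ⁅x₁, y₂⁆ :=
      (inv_eq_of_mul_eq_one_right hde).symm.trans
        (inv_eq_of_mul_eq_one_right (commsq x₁ hx₁Q y₂ hy₂Q))
    have hd1 : ⁅x₁, y₂⁆ = 1 := by
      have hsd' : s * ⁅x₁, y₂⁆ * s⁻¹ = ⁅x₁, y₂⁆ := by rw [hsd, he, hf, mul_one]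
      rcases elems _ (commZ x₁ hx₁Q y₂ hy₂Q) with h | h | h | h
      · exact h
      · rw [h, hsa] at hsd'
        exact absurd hsd'.symm hab
      · rw [h, hsb] at hsd'
        exact absurd (mul_eq_right.mp hsd') ha1
      · rw [h, hsab] at hsd'
        exact absurd (mul_left_cancel ((mul_one a).trans hsd')).symm hb1
    have cx : ∀ u v : G, ⁅u, v⁆ = 1 → u * v = v * u :=
      fun u v h => commutatorElement_eq_one_iff_mul_comm.mp h
    have key : ∀ w ∈ Q, w * x₂ = x₂ * w → w * y₂ = y₂ * w →
        w ∈ Subgroup.centralizer (D₂ : Set G) := by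
      intro w hw h2 h3
      have hle : D₂ ≤ Subgroup.centralizer ({w} : Set G) := by
        rw [hB₂.gen]
        apply sup_le
        · intro z hz
          exact Subgroup.mem_centralizer_iff.mpr (fun h hh => by
            rw [Set.mem_singleton_iff] at hh; rw [hh]
            exact hZcent z hz w hw)
        · rw [Subgroup.closure_le]
          rintro u hu
          simp only [Set.mem_insert_iff, Set.mem_singleton_iff] at hu
          rcases hu with rfl | rfl
          · exact Subgroup.mem_centralizer_iff.mpr (fun h hh => by
              rw [Set.mem_singleton_iff] at hh; subst hh; exact h2)
          · exact Subgroup.mem_centralizer_iff.mpr (fun h hh => by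
              rw [Set.mem_singleton_iff] at hh; subst hh; exact h3)
      exact Subgroup.mem_centralizer_iff.mpr (fun v hv =>
        (Subgroup.mem_centralizer_iff.mp (hle hv) w (Set.mem_singleton w)).symm)
    have hD1le : D₁ ≤ Subgroup.centralizer (D₂ : Set G) := by
      rw [hB₁.gen]
      apply sup_le
      · intro z hz
        exact Subgroup.mem_centralizer_iff.mpr (fun h hh => hZcent z hz h (hD₂.lt_Q.le hh))
      · rw [Subgroup.closure_le]
        rintro u hu
        simp only [Set.mem_insert_iff, Set.mem_singleton_iff] at hu
        rcases hu with rfl | rfl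
        · exact key _ hx₁Q (cx _ _ hc) (cx _ _ hd1)
        · exact key _ hy₁Q (cx _ _ (he.trans hd1)) (cx _ _ hf)
    intro d₁ hd₁ d₂ hd₂
    exact (Subgroup.mem_centralizer_iff.mp (hD1le hd₁) d₂ hd₂).symm
  · -- [x₁,x₂] = a : the unique commutator table
    right
    have hf : ⁅y₁, y₂⁆ = b := by
      rw [hc, hsa] at hsc; exact hsc.symm
    have hde : ⁅x₁, y₂⁆ * ⁅y₁, x₂⁆ = 1 := by
      have h1 := hsf
      rw [hf, hc, hsb] at h1
      have h2 : a * b = a * ((⁅x₁, y₂⁆ * ⁅y₁, x₂⁆) * b) := by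
        rw [h1, mul_assoc, ← mul_assoc ⁅x₁, y₂⁆ ⁅y₁, x₂⁆ b]
      have h3 : b = (⁅x₁, y₂⁆ * ⁅y₁, x₂⁆) * b := mul_left_cancel h2
      exact mul_eq_right.mp h3.symm
    have he : ⁅y₁, x₂⁆ = ⁅x₁, y₂⁆ :=
      (inv_eq_of_mul_eq_one_right hde).symm.trans
        (inv_eq_of_mul_eq_one_right (commsq x₁ hx₁Q y₂ hy₂Q))
    have hd : ⁅x₁, y₂⁆ = a * b := by
      have hsd' : s * ⁅x₁, y₂⁆ * s⁻¹ = ⁅x₁, y₂⁆ * b := by rw [hsd, he, hf]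
      rcases elems _ (commZ x₁ hx₁Q y₂ hy₂Q) with h | h | h | h
      · rw [h, one_mul] at hsd'
        exact absurd (((by group : (1 : G) = s * 1 * s⁻¹)).trans hsd') hb1.symm
      · rw [h, hsa] at hsd'
        exact absurd (mul_eq_right.mp hsd'.symm) ha1
      · rw [h, hsb, hbb] at hsd'
        exact absurd hsd' hab1
      · exact h
    exact ⟨hc, hf, hd, he.trans hd⟩
  · -- [x₁,x₂] = b is impossible
    exfalso
    rw [hc, htb] at htc
    exact ha1 (mul_eq_right.mp htc)
  · -- [x₁,x₂] = ab is impossible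
    exfalso
    rw [hc, htab] at htc
    exact ha1 (mul_eq_right.mp htc.symm)
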